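/- Let S be a countably compact Hausdorff semitopological monoid with zero and let λ ≥ 1 be any cardinal. Then the Brandt λ⁰-extension B⁰_λ(S) endowed with the canonical topology τ_B^S (disjoint-sum topology on the nonzero part, cofinite-sheet neighbourhoods of zero) is a countably compact Hausdorff semitopological semigroup. -/
import Mathlib


open Topology Set Filter

/-- The underlying set of the Brandt `λ⁰`-extension `B⁰_λ(S)`:
nonzero elements are triples `(α, s, β)` with `s ≠ 0`, and `none` is the zero. -/
abbrev Brandt (S : Type*) [Zero S] (lam : Type*) : Type _ :=
  Option (lam × {s : S // s ≠ 0} × lam)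

open Classical in
/-- Multiplication of the Brandt `λ⁰`-extension. -/
noncomputable def brandtMul {S : Type*} [MonoidWithZero S] {lam : Type*} :
    Brandt S lam → Brandt S lam → Brandt S lam
  | some (α, a, β), some (γ, b, δ) =>
      if h : β = γ ∧ a.1 * b.1 ≠ 0 then some (α, ⟨a.1 * b.1, h.2⟩, δ) else none
  | _, _ => none

/-- The set `S*_{α,β}` of nonzero elements of the `(α,β)` sheet. -/
def sheet {S : Type*} [Zero S] {lam : Type*} (α β : lam) : Set (Brandt S lam) :=
  {x | ∃ s : {s : S // s ≠ 0}, x = some (α, s, β)}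

/-- The sheet `S_{α,β} = S*_{α,β} ∪ {0}`. -/
def sheet0 {S : Type*} [Zero S] {lam : Type*} (α β : lam) : Set (Brandt S lam) :=
  sheet α β ∪ {none}

/-- The trace `(U)*_{α,β}` of a subset `U ⊆ S` on the `(α,β)` sheet (zero removed). -/
def sheetTrace {S : Type*} [Zero S] {lam : Type*} (α β : lam) (U : Set S) :
    Set (Brandt S lam) :=
  {x | ∃ s : {s : S // s ≠ 0}, s.1 ∈ U ∧ x = some (α, s, β)}

/-- The basic neighbourhood `U_A(0)` of zero: all sheets outside the finite set `A`
together with the traces of `U` on the sheets from `A`. -/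
def UA0 {S : Type*} [Zero S] {lam : Type*} (A : Set (lam × lam)) (U : Set S) :
    Set (Brandt S lam) :=
  {x | x = none ∨ ∃ (α β : lam) (s : {s : S // s ≠ 0}),
        x = some (α, s, β) ∧ ((α, β) ∉ A ∨ s.1 ∈ U)}

/-- The canonical topology `τ_B^S` on the Brandt `λ⁰`-extension, generated by the base
consisting of traces of open subsets of `S` on the sheets and of the sets `U_A(0)`. -/
def brandtTop (S : Type*) [Zero S] [TopologicalSpace S] (lam : Type*) :
    TopologicalSpace (Brandt S lam) :=
  TopologicalSpace.generateFrom
    ({W | ∃ (α β : lam) (U : Set S), IsOpen U ∧ W = sheetTrace α β U} ∪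
     {W | ∃ A : Set (lam × lam), A.Finite ∧
        ∃ U : Set S, IsOpen U ∧ (0 : S) ∈ U ∧ W = UA0 A U})

open Classical in
/-- The canonical copy of `S` as the sheet `S_{α,α}` inside `B⁰_λ(S)`. -/
noncomputable def brandtIncl {S : Type*} [Zero S] {lam : Type*} (α : lam) (s : S) :
    Brandt S lam :=
  if h : s = 0 then none else some (α, ⟨s, h⟩, α)

/-- Separate continuity of a multiplication. -/
def SepCont {X : Type*} [TopologicalSpace X] (m : X → X → X) : Prop :=
  ∀ t : X, Continuous (m t) ∧ Continuous (fun x => m x t)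

/-- A family of subsets is locally finite. -/
def SetLocallyFinite {X : Type*} [TopologicalSpace X] (F : Set (Set X)) : Prop :=
  ∀ x : X, ∃ U : Set X, x ∈ U ∧ IsOpen U ∧ {A ∈ F | (A ∩ U).Nonempty}.Finite

/-- `X` is pseudocompact: every locally finite family of nonempty open subsets is finite. -/
def Pseudocompact (X : Type*) [TopologicalSpace X] : Prop :=
  ∀ F : Set (Set X), (∀ U ∈ F, IsOpen U ∧ U.Nonempty) → SetLocallyFinite F → F.Finite

/-- `X` is countably pracompact: there is a dense set `A` such that every infinite
subset of `A` has an accumulation point in `X`. -/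
def CountablyPracompact (X : Type*) [TopologicalSpace X] : Prop :=
  ∃ A : Set X, Dense A ∧ ∀ B ⊆ A, B.Infinite → ∃ x : X, AccPt x (𝓟 B)

/-- `X` is countably compact: every countable open cover has a finite subcover. -/
def CountablyCompactSp (X : Type*) [TopologicalSpace X] : Prop :=
  ∀ F : Set (Set X), F.Countable → (∀ U ∈ F, IsOpen U) → ⋃₀ F = univ →
    ∃ G ⊆ F, G.Finite ∧ ⋃₀ G = univ

section BrandtAux

open TopologicalSpace

set_option linter.unusedSectionVars false

variable {S : Type*} [MonoidWithZero S] [TopologicalSpace S] {lam : Type*}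

lemma Brandt.isOpen_sheetTrace (α β : lam) {U : Set S} (hU : IsOpen U) :
    IsOpen[brandtTop S lam] (sheetTrace α β U) :=
  isOpen_generateFrom_of_mem (Or.inl ⟨α, β, U, hU, rfl⟩)

lemma Brandt.isOpen_UA0 {A : Set (lam × lam)} (hA : A.Finite) {U : Set S}
    (hU : IsOpen U) (h0 : (0 : S) ∈ U) :
    IsOpen[brandtTop S lam] (UA0 A U) :=
  isOpen_generateFrom_of_mem (Or.inr ⟨A, hA, U, hU, h0, rfl⟩)

lemma Brandt.UA0_inter (A₁ A₂ : Set (lam × lam)) (U₁ U₂ : Set S) :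
    UA0 (A₁ ∪ A₂) (U₁ ∩ U₂) ⊆ UA0 A₁ U₁ ∩ UA0 A₂ U₂ := by
  rintro x (rfl | ⟨α, β, s, rfl, h⟩)
  · exact ⟨Or.inl rfl, Or.inl rfl⟩
  · constructor <;> refine Or.inr ⟨α, β, s, rfl, ?_⟩
    · rcases h with h | h
      · exact Or.inl fun hm => h (Or.inl hm)
      · exact Or.inr h.1
    · rcases h with h | h
      · exact Or.inl fun hm => h (Or.inr hm)
      · exact Or.inr h.2

lemma Brandt.exists_UA0 {W : Set (Brandt S lam)} (hW : IsOpen[brandtTop S lam] W)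
    (h0 : (none : Brandt S lam) ∈ W) :
    ∃ (A : Set (lam × lam)) (U : Set S),
      A.Finite ∧ IsOpen U ∧ (0 : S) ∈ U ∧ UA0 A U ⊆ W := by
  have hW' : TopologicalSpace.GenerateOpen
      ({W | ∃ (α β : lam) (U : Set S), IsOpen U ∧ W = sheetTrace α β U} ∪
       {W | ∃ A : Set (lam × lam), A.Finite ∧
          ∃ U : Set S, IsOpen U ∧ (0 : S) ∈ U ∧ W = UA0 A U}) W := hW
  clear hW
  induction hW' with
  | basic V hV =>
    rcases hV with ⟨α, β, U, hU, rfl⟩ | ⟨A, hA, U, hU, h0U, rfl⟩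
    · rcases h0 with ⟨s, hs⟩; exact absurd hs (by simp)
    · exact ⟨A, U, hA, hU, h0U, subset_rfl⟩
  | univ => exact ⟨∅, Set.univ, Set.finite_empty, isOpen_univ, Set.mem_univ _, Set.subset_univ _⟩
  | inter V₁ V₂ _ _ ih₁ ih₂ =>
    obtain ⟨A₁, U₁, hA₁, hU₁, h01, hs₁⟩ := ih₁ h0.1
    obtain ⟨A₂, U₂, hA₂, hU₂, h02, hs₂⟩ := ih₂ h0.2
    exact ⟨A₁ ∪ A₂, U₁ ∩ U₂, hA₁.union hA₂, hU₁.inter hU₂, ⟨h01, h02⟩,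
      fun x hx => ⟨hs₁ (Brandt.UA0_inter A₁ A₂ U₁ U₂ hx).1,
        hs₂ (Brandt.UA0_inter A₁ A₂ U₁ U₂ hx).2⟩⟩
  | sUnion s _ ih =>
    obtain ⟨V, hV, h0V⟩ := h0
    obtain ⟨A, U, hA, hU, h0U, hsub⟩ := ih V hV h0V
    exact ⟨A, U, hA, hU, h0U, hsub.trans (Set.subset_sUnion_of_mem hV)⟩

open Classical in
noncomputable def Brandt.incl (α β : lam) (s : S) : Brandt S lam :=
  if h : s = 0 then none else some (α, ⟨s, h⟩, β)

lemma Brandt.continuous_incl [T1Space S] (α β : lam) :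
    Continuous[_, brandtTop S lam] (Brandt.incl (S := S) α β) := by
  rw [brandtTop, continuous_generateFrom_iff]
  rintro W (⟨γ, δ, U, hU, rfl⟩ | ⟨A, hA, U, hU, h0U, rfl⟩)
  · by_cases hc : α = γ ∧ β = δ
    · obtain ⟨rfl, rfl⟩ := hc
      have : Brandt.incl (S := S) α β ⁻¹' sheetTrace α β U = U \ {0} := by
        ext s
        by_cases hs : s = 0 <;>
          simp [Brandt.incl, sheetTrace, hs]
      rw [this]; exact hU.sdiff isClosed_singleton
    · have : Brandt.incl (S := S) α β ⁻¹' sheetTrace γ δ U = ∅ := by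
        ext s
        by_cases hs : s = 0 <;>
          simp only [Set.mem_preimage, Brandt.incl, sheetTrace, hs, dif_pos, dif_neg,
            Set.mem_setOf_eq, Set.mem_empty_iff_false, iff_false, not_exists, not_and] <;>
          intro t ht <;> simp_all
      rw [this]; exact isOpen_empty
  · by_cases hm : (α, β) ∈ A
    · have : Brandt.incl (S := S) α β ⁻¹' UA0 A U = U := by
        ext s
        by_cases hs : s = 0
        · simp [Brandt.incl, UA0, hs, h0U]
        · simp only [Set.mem_preimage, Brandt.incl, UA0, hs, dif_neg, Set.mem_setOf_eq]
          constructor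
          · rintro (h | ⟨γ, δ, t, ht, h⟩)
            · simp at h
            · obtain ⟨rfl, rfl, rfl⟩ : α = γ ∧ (⟨s, hs⟩ : {s : S // s ≠ 0}) = t ∧ β = δ := by
                simpa [Prod.ext_iff] using ht
              rcases h with h | h
              · exact absurd hm h
              · exact h
          · intro hsU
            exact Or.inr ⟨α, β, ⟨s, hs⟩, rfl, Or.inr hsU⟩
      rw [this]; exact hU
    · have : Brandt.incl (S := S) α β ⁻¹' UA0 A U = Set.univ := by
        ext s
        by_cases hs : s = 0
        · simp [Brandt.incl, UA0, hs]
        · simp only [Set.mem_preimage, Brandt.incl, UA0, hs, dif_neg, Set.mem_setOf_eq,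
            Set.mem_univ, iff_true]
          exact Or.inr ⟨α, β, ⟨s, hs⟩, rfl, Or.inl hm⟩
      rw [this]; exact isOpen_univ

end BrandtAux


section BrandtMain

open TopologicalSpace

set_option linter.unusedSectionVars false

variable {S : Type*} [MonoidWithZero S] [TopologicalSpace S] {lam : Type*}

lemma Brandt.mul_none_left (x : Brandt S lam) : brandtMul none x = none := by
  cases x <;> rfl

lemma Brandt.mul_none_right (x : Brandt S lam) : brandtMul x none = none := by
  cases x <;> rfl

open Classical in
lemma Brandt.mul_some (α β γ δ : lam) (a b : {s : S // s ≠ 0}) :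
    brandtMul (some (α, a, β) : Brandt S lam) (some (γ, b, δ)) =
      if h : β = γ ∧ a.1 * b.1 ≠ 0 then some (α, ⟨a.1 * b.1, h.2⟩, δ) else none := rfl

lemma Brandt.mem_sheetTrace_some {α β γ δ : lam} {b : {s : S // s ≠ 0}} {U : Set S} :
    (some (γ, b, δ) : Brandt S lam) ∈ sheetTrace α β U ↔ γ = α ∧ δ = β ∧ b.1 ∈ U := by
  constructor
  · rintro ⟨s, hs, h⟩
    obtain ⟨rfl, rfl, rfl⟩ : γ = α ∧ b = s ∧ δ = β := by simpa [Prod.ext_iff] using h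
    exact ⟨rfl, rfl, hs⟩
  · rintro ⟨rfl, rfl, hb⟩; exact ⟨b, hb, rfl⟩

@[simp] lemma Brandt.none_not_mem_sheetTrace {α β : lam} {U : Set S} :
    (none : Brandt S lam) ∉ sheetTrace α β U := by
  rintro ⟨s, _, h⟩; simp at h

lemma Brandt.mem_UA0_some {A : Set (lam × lam)} {U : Set S} {γ δ : lam}
    {b : {s : S // s ≠ 0}} :
    (some (γ, b, δ) : Brandt S lam) ∈ UA0 A U ↔ ((γ, δ) ∉ A ∨ b.1 ∈ U) := by
  constructor
  · rintro (h | ⟨γ₀, δ₀, s, h1, h2⟩)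
    · simp at h
    · obtain ⟨rfl, rfl, rfl⟩ : γ = γ₀ ∧ b = s ∧ δ = δ₀ := by simpa [Prod.ext_iff] using h1
      exact h2
  · intro h; exact Or.inr ⟨γ, δ, b, rfl, h⟩

@[simp] lemma Brandt.none_mem_UA0 {A : Set (lam × lam)} {U : Set S} :
    (none : Brandt S lam) ∈ UA0 A U := Or.inl rfl

lemma Brandt.mul_cont [T2Space S] (hsep : SepCont (fun x y : S => x * y))
    (t : Brandt S lam) :
    Continuous[brandtTop S lam, brandtTop S lam] (brandtMul t) ∧
    Continuous[brandtTop S lam, brandtTop S lam] (fun x => brandtMul x t) := by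
  cases t with
  | none =>
    constructor
    · have h1 : brandtMul (none : Brandt S lam) = fun _ => (none : Brandt S lam) := by
        funext x; exact Brandt.mul_none_left x
      rw [h1]
      exact @continuous_const _ _ (brandtTop S lam) (brandtTop S lam) none
    · have h2 : (fun x : Brandt S lam => brandtMul x none)
          = fun _ => (none : Brandt S lam) := by
        funext x; exact Brandt.mul_none_right x
      rw [h2]
      exact @continuous_const _ _ (brandtTop S lam) (brandtTop S lam) none
  | some q =>
    obtain ⟨α, a, β⟩ := q
    constructor
    · -- left translation
      rw [brandtTop, continuous_generateFrom_iff]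
      rintro Z (⟨γ, δ, U, hU, rfl⟩ | ⟨A, hA, U, hU, h0U, rfl⟩)
      · by_cases hγ : α = γ
        · subst hγ
          have hpre : brandtMul (some (α, a, β)) ⁻¹' sheetTrace α δ U
              = sheetTrace β δ ((fun c => a.1 * c) ⁻¹' (U \ {0})) := by
            ext x
            rw [Set.mem_preimage]
            cases x with
            | none => rw [Brandt.mul_none_right]; simp
            | some p =>
              obtain ⟨γ', b, δ'⟩ := p
              rw [Brandt.mul_some]
              by_cases hd : β = γ' ∧ a.1 * b.1 ≠ 0
              · obtain ⟨rfl, hne⟩ := hd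
                rw [dif_pos ⟨rfl, hne⟩, Brandt.mem_sheetTrace_some,
                  Brandt.mem_sheetTrace_some]
                simp only [Set.mem_preimage, Set.mem_diff, Set.mem_singleton_iff]
                tauto
              · rw [dif_neg hd]
                simp only [Brandt.none_not_mem_sheetTrace, false_iff]
                rw [Brandt.mem_sheetTrace_some]
                rintro ⟨rfl, -, h⟩
                have h' : a.1 * b.1 ∈ U \ {0} := h
                exact hd ⟨rfl, fun h0 => h'.2 (Set.mem_singleton_iff.mpr h0)⟩
          rw [hpre]
          exact Brandt.isOpen_sheetTrace β δ
            ((hsep a.1).1.isOpen_preimage _ (hU.sdiff isClosed_singleton))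
        · have hpre : brandtMul (some (α, a, β)) ⁻¹' sheetTrace γ δ U = ∅ := by
            ext x
            rw [Set.mem_preimage]
            simp only [Set.mem_empty_iff_false, iff_false]
            cases x with
            | none => rw [Brandt.mul_none_right]; simp
            | some p =>
              obtain ⟨γ', b, δ'⟩ := p
              rw [Brandt.mul_some]
              by_cases hd : β = γ' ∧ a.1 * b.1 ≠ 0
              · rw [dif_pos hd, Brandt.mem_sheetTrace_some]
                rintro ⟨rfl, -⟩
                exact hγ rfl
              · rw [dif_neg hd]; simp
          rw [hpre]; exact @isOpen_empty _ (brandtTop S lam)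
      · have hpre : brandtMul (some (α, a, β)) ⁻¹' UA0 A U
            = UA0 {p : lam × lam | p.1 = β ∧ (α, p.2) ∈ A} ((fun c => a.1 * c) ⁻¹' U) := by
          ext x
          rw [Set.mem_preimage]
          cases x with
          | none => rw [Brandt.mul_none_right]; simp
          | some p =>
            obtain ⟨γ', b, δ'⟩ := p
            rw [Brandt.mul_some, Brandt.mem_UA0_some]
            by_cases hd : β = γ' ∧ a.1 * b.1 ≠ 0
            · obtain ⟨rfl, hne⟩ := hd
              rw [dif_pos ⟨rfl, hne⟩, Brandt.mem_UA0_some]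
              simp only [Set.mem_setOf_eq, Set.mem_preimage, not_and, true_implies]
              try tauto
            · rw [dif_neg hd]
              simp only [Brandt.none_mem_UA0, true_iff, Set.mem_setOf_eq, not_and,
                Set.mem_preimage]
              by_cases hb : γ' = β
              · subst hb
                have h0 : a.1 * b.1 = 0 := by
                  by_contra hne; exact hd ⟨rfl, hne⟩
                exact Or.inr (by rw [h0]; exact h0U)
              · exact Or.inl fun h => absurd h hb
        rw [hpre]
        refine Brandt.isOpen_UA0 ?_ ((hsep a.1).1.isOpen_preimage _ hU)
          (by simpa using h0U)
        have hss : {p : lam × lam | p.1 = β ∧ (α, p.2) ∈ A}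
            ⊆ (fun p : lam × lam => (β, p.2)) '' A := by
          rintro ⟨x1, x2⟩ ⟨rfl, hm⟩; exact ⟨(α, x2), hm, rfl⟩
        exact (hA.image _).subset hss
    · -- right translation
      rw [brandtTop, continuous_generateFrom_iff]
      rintro Z (⟨γ, δ, U, hU, rfl⟩ | ⟨A, hA, U, hU, h0U, rfl⟩)
      · by_cases hδ : β = δ
        · subst hδ
          have hpre : (fun x => brandtMul x (some (α, a, β))) ⁻¹' sheetTrace γ β U
              = sheetTrace γ α ((fun c => c * a.1) ⁻¹' (U \ {0})) := by
            ext x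
            rw [Set.mem_preimage]
            cases x with
            | none => rw [Brandt.mul_none_left]; simp
            | some p =>
              obtain ⟨γ', b, δ'⟩ := p
              rw [Brandt.mul_some]
              by_cases hd : δ' = α ∧ b.1 * a.1 ≠ 0
              · obtain ⟨rfl, hne⟩ := hd
                rw [dif_pos ⟨rfl, hne⟩, Brandt.mem_sheetTrace_some,
                  Brandt.mem_sheetTrace_some]
                simp only [Set.mem_preimage, Set.mem_diff, Set.mem_singleton_iff]
                tauto
              · rw [dif_neg hd]
                simp only [Brandt.none_not_mem_sheetTrace, false_iff]
                rw [Brandt.mem_sheetTrace_some]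
                rintro ⟨-, rfl, h⟩
                have h' : b.1 * a.1 ∈ U \ {0} := h
                exact hd ⟨rfl, fun h0 => h'.2 (Set.mem_singleton_iff.mpr h0)⟩
          rw [hpre]
          exact Brandt.isOpen_sheetTrace γ α
            ((hsep a.1).2.isOpen_preimage _ (hU.sdiff isClosed_singleton))
        · have hpre : (fun x => brandtMul x (some (α, a, β))) ⁻¹' sheetTrace γ δ U = ∅ := by
            ext x
            rw [Set.mem_preimage]
            simp only [Set.mem_empty_iff_false, iff_false]
            cases x with
            | none => rw [Brandt.mul_none_left]; simp
            | some p =>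
              obtain ⟨γ', b, δ'⟩ := p
              rw [Brandt.mul_some]
              by_cases hd : δ' = α ∧ b.1 * a.1 ≠ 0
              · rw [dif_pos hd, Brandt.mem_sheetTrace_some]
                rintro ⟨-, rfl, -⟩
                exact hδ rfl
              · rw [dif_neg hd]; simp
          rw [hpre]; exact @isOpen_empty _ (brandtTop S lam)
      · have hpre : (fun x => brandtMul x (some (α, a, β))) ⁻¹' UA0 A U
            = UA0 {p : lam × lam | p.2 = α ∧ (p.1, β) ∈ A} ((fun c => c * a.1) ⁻¹' U) := by
          ext x
          rw [Set.mem_preimage]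
          cases x with
          | none => rw [Brandt.mul_none_left]; simp
          | some p =>
            obtain ⟨γ', b, δ'⟩ := p
            rw [Brandt.mul_some, Brandt.mem_UA0_some]
            by_cases hd : δ' = α ∧ b.1 * a.1 ≠ 0
            · obtain ⟨rfl, hne⟩ := hd
              rw [dif_pos ⟨rfl, hne⟩, Brandt.mem_UA0_some]
              simp only [Set.mem_setOf_eq, Set.mem_preimage, not_and, true_implies]
              try tauto
            · rw [dif_neg hd]
              simp only [Brandt.none_mem_UA0, true_iff, Set.mem_setOf_eq, not_and,
                Set.mem_preimage]
              by_cases hb : δ' = α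
              · subst hb
                have h0 : b.1 * a.1 = 0 := by
                  by_contra hne; exact hd ⟨rfl, hne⟩
                exact Or.inr (by rw [h0]; exact h0U)
              · exact Or.inl fun h => absurd h hb
        rw [hpre]
        refine Brandt.isOpen_UA0 ?_ ((hsep a.1).2.isOpen_preimage _ hU)
          (by simpa using h0U)
        have hss : {p : lam × lam | p.2 = α ∧ (p.1, β) ∈ A}
            ⊆ (fun p : lam × lam => (p.1, α)) '' A := by
          rintro ⟨x1, x2⟩ ⟨rfl, hm⟩; exact ⟨(x1, β), hm, rfl⟩
        exact (hA.image _).subset hss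

lemma Brandt.t2 [T2Space S] : @T2Space (Brandt S lam) (brandtTop S lam) := by
  letI := brandtTop S lam
  refine ⟨fun x y hxy => ?_⟩
  match x, y with
  | none, none => exact absurd rfl hxy
  | none, some (α, s, β) =>
    obtain ⟨V0, Vs, hV0, hVs, h0, hs, hdisj⟩ := t2_separation s.2.symm
    refine ⟨UA0 {(α, β)} V0, sheetTrace α β Vs,
      Brandt.isOpen_UA0 (Set.finite_singleton _) hV0 h0,
      Brandt.isOpen_sheetTrace α β hVs, Brandt.none_mem_UA0, ⟨s, hs, rfl⟩, ?_⟩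
    rw [Set.disjoint_left]
    rintro z hz1 hz2
    obtain ⟨u, hu, rfl⟩ := hz2
    rw [Brandt.mem_UA0_some] at hz1
    rcases hz1 with h | h
    · exact h rfl
    · exact Set.disjoint_left.mp hdisj h hu
  | some (α, s, β), none =>
    obtain ⟨V0, Vs, hV0, hVs, h0, hs, hdisj⟩ := t2_separation s.2.symm
    refine ⟨sheetTrace α β Vs, UA0 {(α, β)} V0,
      Brandt.isOpen_sheetTrace α β hVs,
      Brandt.isOpen_UA0 (Set.finite_singleton _) hV0 h0, ⟨s, hs, rfl⟩,
      Brandt.none_mem_UA0, ?_⟩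
    rw [Set.disjoint_left]
    rintro z hz1 hz2
    obtain ⟨u, hu, rfl⟩ := hz1
    rw [Brandt.mem_UA0_some] at hz2
    rcases hz2 with h | h
    · exact h rfl
    · exact Set.disjoint_left.mp hdisj h hu
  | some (α, s, β), some (γ, t, δ) =>
    by_cases hpq : α = γ ∧ β = δ
    · obtain ⟨rfl, rfl⟩ := hpq
      have hst : s.1 ≠ t.1 := by
        intro h
        exact hxy (by rw [Subtype.ext h])
      obtain ⟨Us, Ut, hUs, hUt, hsU, htU, hdisj⟩ := t2_separation hst
      refine ⟨sheetTrace α β Us, sheetTrace α β Ut,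
        Brandt.isOpen_sheetTrace α β hUs, Brandt.isOpen_sheetTrace α β hUt,
        ⟨s, hsU, rfl⟩, ⟨t, htU, rfl⟩, ?_⟩
      rw [Set.disjoint_left]
      rintro z ⟨u, hu, rfl⟩ hz2
      rw [Brandt.mem_sheetTrace_some] at hz2
      exact Set.disjoint_left.mp hdisj hu hz2.2.2
    · refine ⟨sheetTrace α β Set.univ, sheetTrace γ δ Set.univ,
        Brandt.isOpen_sheetTrace α β isOpen_univ, Brandt.isOpen_sheetTrace γ δ isOpen_univ,
        ⟨s, Set.mem_univ _, rfl⟩, ⟨t, Set.mem_univ _, rfl⟩, ?_⟩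
      rw [Set.disjoint_left]
      rintro z ⟨u, -, rfl⟩ hz2
      rw [Brandt.mem_sheetTrace_some] at hz2
      exact hpq ⟨hz2.1, hz2.2.1⟩

lemma Brandt.ccomp [T2Space S] (hcc : CountablyCompactSp S) :
    @CountablyCompactSp (Brandt S lam) (brandtTop S lam) := by
  letI := brandtTop S lam
  intro F hFc hFo hFu
  have hnone : (none : Brandt S lam) ∈ ⋃₀ F := hFu ▸ Set.mem_univ _
  obtain ⟨W, hWF, hW0⟩ := hnone
  obtain ⟨A, U, hA, hU, h0U, hsub⟩ := Brandt.exists_UA0 (hFo W hWF) hW0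
  have key : ∀ p : lam × lam, ∃ G ⊆ F, G.Finite ∧ sheet0 p.1 p.2 ⊆ ⋃₀ G := by
    rintro ⟨α, β⟩
    set e := Brandt.incl (S := S) (lam := lam) α β with he
    have hecont := Brandt.continuous_incl (S := S) (lam := lam) α β
    obtain ⟨G', hG'sub, hG'fin, hG'u⟩ :
        ∃ G' ⊆ (fun W => e ⁻¹' W) '' F, G'.Finite ∧ ⋃₀ G' = Set.univ := by
      apply hcc
      · exact hFc.image _
      · rintro V ⟨W', hW'F, rfl⟩; exact hecont.isOpen_preimage W' (hFo W' hW'F)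
      · ext s; simp only [Set.mem_univ, iff_true]
        have hse : e s ∈ ⋃₀ F := hFu ▸ Set.mem_univ _
        obtain ⟨W', hW'F, hsW⟩ := hse
        exact ⟨e ⁻¹' W', ⟨W', hW'F, rfl⟩, hsW⟩
    have : Finite G' := hG'fin
    have hchoice : ∀ V : G', ∃ W' ∈ F, e ⁻¹' W' = V.1 := fun V => hG'sub V.2
    choose f hf1 hf2 using hchoice
    refine ⟨Set.range f, ?_, Set.finite_range f, ?_⟩
    · rintro W' ⟨V, rfl⟩; exact hf1 V
    · intro x hx
      obtain ⟨s, rfl⟩ : ∃ s, x = e s := by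
        rcases hx with ⟨u, rfl⟩ | rfl
        · exact ⟨u.1, by simp [he, Brandt.incl, u.2]⟩
        · exact ⟨0, by simp [he, Brandt.incl]⟩
      have hs : s ∈ ⋃₀ G' := hG'u ▸ Set.mem_univ _
      obtain ⟨V, hVG, hsV⟩ := hs
      refine ⟨f ⟨V, hVG⟩, ⟨⟨V, hVG⟩, rfl⟩, ?_⟩
      have hmem : s ∈ e ⁻¹' f ⟨V, hVG⟩ := by rw [hf2 ⟨V, hVG⟩]; exact hsV
      exact hmem
  choose G hGF hGfin hGcov using key
  refine ⟨insert W (⋃ p ∈ A, G p), ?_, ?_, ?_⟩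
  · intro V hV
    rcases hV with rfl | hV
    · exact hWF
    · obtain ⟨p, _, hVp⟩ := Set.mem_iUnion₂.mp hV
      exact hGF p hVp
  · exact (hA.biUnion fun p _ => hGfin p).insert W
  · apply Set.eq_univ_of_forall
    intro x
    cases x with
    | none => exact ⟨W, Set.mem_insert _ _, hW0⟩
    | some q =>
      obtain ⟨γ, s, δ⟩ := q
      by_cases hp : (γ, δ) ∈ A
      · have hx : (some (γ, s, δ) : Brandt S lam) ∈ ⋃₀ G (γ, δ) :=
          hGcov (γ, δ) (Or.inl ⟨s, rfl⟩)
        obtain ⟨V, hVG, hxV⟩ := hx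
        exact ⟨V, Set.mem_insert_of_mem _ (Set.mem_biUnion hp hVG), hxV⟩
      · exact ⟨W, Set.mem_insert _ _, hsub (Or.inr ⟨γ, δ, s, rfl, Or.inl hp⟩)⟩

end BrandtMain


/-- For a countably compact Hausdorff semitopological monoid `S` with zero, the Brandt
extension with the canonical topology `τ_B^S` is a countably compact Hausdorff
semitopological semigroup. -/
theorem brandt_countablyCompact {S lam : Type*} [MonoidWithZero S] [TopologicalSpace S]
    [T2Space S] [Nonempty lam] (hsep : SepCont (fun x y : S => x * y))
    (hcc : CountablyCompactSp S) :
    @CountablyCompactSp (Brandt S lam) (brandtTop S lam) ∧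
    @T2Space (Brandt S lam) (brandtTop S lam) ∧
    (∀ t : Brandt S lam,
      Continuous[brandtTop S lam, brandtTop S lam] (brandtMul t) ∧
      Continuous[brandtTop S lam, brandtTop S lam] (fun x => brandtMul x t)) := by
  exact ⟨Brandt.ccomp hcc, Brandt.t2, fun t => Brandt.mul_cont hsep t⟩
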